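/- Fix integers m ≥ 1, p ≥ 0, a nonempty cluster C_r ⊆ {1,…,m}, and let Ω_r := diag(1_{C_r}) − (1/|C_r|) 1_{C_r} 1_{C_r}^T ∈ ℝ^{m×m}. Let H ∈ ℝ^{(m+p)×(m+p)} be symmetric positive semidefinite, partitioned as H = [[M, N],[N^T, Q]] with M ∈ ℝ^{m×m} positive definite, and set J(q) := ½ q^T H q for q ∈ ℝ^{m+p}. Let P_r be the Moore–Penrose pseudoinverse of Ω_r M Ω_r and define S_r := {x ∈ ℝ^m : Σ_{j ∈ C_r} x_j = 0 and x_j = 0 for all j ∉ C_r}. Then: (a) S_r equals the column space of Ω_r; (b) for any q_C ∈ ℝ^m and q_L ∈ ℝ^p, the vector q* := q_C − P_r (M q_C + N q_L) satisfies q* − q_C ∈ S_r, and for every q' ∈ ℝ^m with q' − q_C ∈ S_r one has J((q'; q_L)) ≥ J((q*; q_L)); i.e., q* minimizes J over the affine constraint set. -/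

import Mathlib

open Matrix

noncomputable def Omega {m : ℕ} (C : Finset (Fin m)) : Matrix (Fin m) (Fin m) ℝ :=
  Matrix.diagonal (fun i => if i ∈ C then (1 : ℝ) else 0) -
    (1 / (C.card : ℝ)) • Matrix.vecMulVec (fun i => if i ∈ C then (1 : ℝ) else 0)
      (fun i => if i ∈ C then (1 : ℝ) else 0)

/-- `P` is the Moore–Penrose pseudoinverse of `B`. -/
def IsMP {m : ℕ} (B P : Matrix (Fin m) (Fin m) ℝ) : Prop :=
  B * P * B = B ∧ P * B * P = P ∧ (B * P)ᵀ = B * P ∧ (P * B)ᵀ = P * B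

def InS {m : ℕ} (C : Finset (Fin m)) (x : Fin m → ℝ) : Prop :=
  (∑ j ∈ C, x j = 0) ∧ ∀ j ∉ C, x j = 0

variable {m : ℕ} (C : Finset (Fin m))

lemma omega_mulVec (y : Fin m → ℝ) :
    (Omega C) *ᵥ y = fun i => if i ∈ C then y i - (∑ j ∈ C, y j) / C.card else 0 := by
  funext i
  simp only [Omega, Matrix.sub_mulVec, Matrix.smul_mulVec, Pi.sub_apply, Pi.smul_apply,
    Matrix.mulVec_diagonal, smul_eq_mul]
  have h1 : (Matrix.vecMulVec (fun i => if i ∈ C then (1 : ℝ) else 0)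
      (fun i => if i ∈ C then (1 : ℝ) else 0) *ᵥ y) i
      = (if i ∈ C then (1:ℝ) else 0) * ∑ j ∈ C, y j := by
    simp only [Matrix.mulVec, dotProduct, Matrix.vecMulVec_apply, mul_assoc, ← Finset.mul_sum]
    congr 1
    have e : ∀ j, (if j ∈ C then (1:ℝ) else 0) * y j = if j ∈ C then y j else 0 := by
      intro j; split <;> simp
    rw [Finset.sum_congr rfl fun j _ => e j, Finset.sum_ite_mem, Finset.univ_inter]
  rw [h1]
  split <;> ring

lemma inS_omega (hC : C.Nonempty) (y : Fin m → ℝ) : InS C ((Omega C) *ᵥ y) := by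
  have hc : (C.card : ℝ) ≠ 0 := by
    exact_mod_cast (Finset.card_pos.mpr hC).ne'
  rw [omega_mulVec]
  constructor
  · rw [Finset.sum_congr rfl (fun j hj => if_pos hj)]
    rw [Finset.sum_sub_distrib, Finset.sum_const, nsmul_eq_mul]
    field_simp
    ring
  · intro j hj; exact if_neg hj

lemma omega_fix (x : Fin m → ℝ) (hx : InS C x) : (Omega C) *ᵥ x = x := by
  rw [omega_mulVec]
  funext i
  by_cases hi : i ∈ C
  · simp [hi, hx.1]
  · simp [hi, hx.2 i hi]

lemma omega_transpose : (Omega C)ᵀ = Omega C := by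
  unfold Omega
  rw [Matrix.transpose_sub, Matrix.transpose_smul, Matrix.diagonal_transpose]
  congr 1
  ext i j
  simp [Matrix.vecMulVec_apply, mul_comm]

lemma inS_sub (x y : Fin m → ℝ) (hx : InS C x) (hy : InS C y) : InS C (x - y) := by
  refine ⟨?_, fun j hj => ?_⟩
  · simp [Finset.sum_sub_distrib, hx.1, hy.1]
  · simp [hx.2 j hj, hy.2 j hj]

lemma omega_idem (hC : C.Nonempty) : Omega C * Omega C = Omega C := by
  ext i j
  have h : ∀ v, (Omega C * Omega C) *ᵥ v = Omega C *ᵥ v := by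
    intro v
    rw [← Matrix.mulVec_mulVec, omega_fix C _ (inS_omega C hC v)]
  have := congrFun (h (Pi.single j 1)) i
  rwa [Matrix.mulVec_single_one, Matrix.mulVec_single_one, Matrix.col_apply,
    Matrix.col_apply] at this

lemma mulVec_dot (A : Matrix (Fin m) (Fin m) ℝ) (x y : Fin m → ℝ) :
    x ⬝ᵥ (A *ᵥ y) = (Aᵀ *ᵥ x) ⬝ᵥ y := by
  rw [Matrix.dotProduct_mulVec, Matrix.mulVec_transpose]
lemma inS_neg {m : ℕ} (C : Finset (Fin m)) (x : Fin m → ℝ) (hx : InS C x) : InS C (-x) := by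
  refine ⟨by simp [hx.1], fun j hj => by simp [hx.2 j hj]⟩

lemma mulVec_dot' {a b : ℕ} (A : Matrix (Fin a) (Fin b) ℝ) (x : Fin a → ℝ) (y : Fin b → ℝ) :
    x ⬝ᵥ (A *ᵥ y) = (Aᵀ *ᵥ x) ⬝ᵥ y := by
  rw [Matrix.dotProduct_mulVec, Matrix.mulVec_transpose]

theorem cluster_update_minimizes (m p : ℕ) (hm : 1 ≤ m)
    (C : Finset (Fin m)) (hC : C.Nonempty)
    (M : Matrix (Fin m) (Fin m) ℝ) (N : Matrix (Fin m) (Fin p) ℝ)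
    (Q : Matrix (Fin p) (Fin p) ℝ)
    (hH : (Matrix.fromBlocks M N Nᵀ Q).PosSemidef) (hM : M.PosDef)
    (P : Matrix (Fin m) (Fin m) ℝ)
    (hP : IsMP (Omega C * M * Omega C) P)
    (J : (Fin m ⊕ Fin p → ℝ) → ℝ)
    (hJ : ∀ q, J q = (1 / 2) * (q ⬝ᵥ (Matrix.fromBlocks M N Nᵀ Q).mulVec q)) :
    -- (a) S_r is the column space of Ω_r
    (∀ x : Fin m → ℝ,
      ((∑ j ∈ C, x j = 0) ∧ ∀ j ∉ C, x j = 0) ↔ ∃ y, (Omega C).mulVec y = x) ∧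
    -- (b) the update is feasible and optimal
    (∀ qC : Fin m → ℝ, ∀ qL : Fin p → ℝ,
      let qs := qC - P.mulVec (M.mulVec qC + N.mulVec qL)
      ((∑ j ∈ C, (qs - qC) j = 0) ∧ ∀ j ∉ C, (qs - qC) j = 0) ∧
      ∀ q' : Fin m → ℝ, ((∑ j ∈ C, (q' - qC) j = 0) ∧ ∀ j ∉ C, (q' - qC) j = 0) →
        J (Sum.elim qs qL) ≤ J (Sum.elim q' qL)) := by
  obtain ⟨h1, h2, h3, h4⟩ := hP
  set B := Omega C * M * Omega C with hBdef
  clear_value B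
  have hMsym : Mᵀ = M := by
    have := hM.1
    rwa [Matrix.IsHermitian, Matrix.conjTranspose_eq_transpose_of_trivial] at this
  have hB : Bᵀ = B := by
    rw [hBdef, Matrix.transpose_mul, Matrix.transpose_mul, omega_transpose, hMsym,
      Matrix.mul_assoc]
  have hPB : P * B = B * Pᵀ := by
    calc P * B = (P * B)ᵀ := h4.symm
      _ = Bᵀ * Pᵀ := Matrix.transpose_mul _ _
      _ = B * Pᵀ := by rw [hB]
  have hPfact : P = Omega C * (M * Omega C * (Pᵀ * P)) := by
    calc P = P * B * P := h2.symm
      _ = (B * Pᵀ) * P := by rw [Matrix.mul_assoc, ← Matrix.mul_assoc, hPB]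
      _ = Omega C * (M * Omega C * (Pᵀ * P)) := by
          rw [hBdef]; simp only [Matrix.mul_assoc]
  have hInSP : ∀ v, InS C (P *ᵥ v) := by
    intro v
    have : P *ᵥ v = Omega C *ᵥ ((M * Omega C * (Pᵀ * P)) *ᵥ v) := by
      rw [Matrix.mulVec_mulVec, ← hPfact]
    rw [this]
    exact inS_omega C hC _
  have hi : B * P = Pᵀ * B := by
    calc B * P = (B * P)ᵀ := h3.symm
      _ = Pᵀ * Bᵀ := Matrix.transpose_mul _ _
      _ = Pᵀ * B := by rw [hB]
  have hBPt : B * P = B * Pᵀ := by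
    calc B * P = Pᵀ * B := hi
      _ = Pᵀ * (B * P * B) := by rw [h1]
      _ = (Pᵀ * B) * (P * B) := by simp only [Matrix.mul_assoc]
      _ = (B * P) * (B * Pᵀ) := by rw [← hi, hPB]
      _ = (B * P * B) * Pᵀ := by simp only [Matrix.mul_assoc]
      _ = B * Pᵀ := by rw [h1]
  have hA2 : Pᵀ * B * Pᵀ = Pᵀ := by
    calc Pᵀ * B * Pᵀ = Pᵀ * (B * Pᵀ) := by rw [Matrix.mul_assoc]
      _ = Pᵀ * (P * B) := by rw [← hPB]
      _ = Pᵀ * (P * B)ᵀ := by rw [h4]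
      _ = (P * B * P)ᵀ := (Matrix.transpose_mul (P * B) P).symm
      _ = Pᵀ := by rw [h2]
  have hPsym : Pᵀ = P := by
    have e1 : Pᵀ = (B * P) * P := by
      calc Pᵀ = Pᵀ * B * Pᵀ := hA2.symm
        _ = Pᵀ * (B * Pᵀ) := by rw [Matrix.mul_assoc]
        _ = Pᵀ * (B * P) := by rw [← hBPt]
        _ = (Pᵀ * B) * P := by rw [Matrix.mul_assoc]
        _ = (B * P) * P := by rw [← hi]
    have e2 : P = (B * P) * P := by
      calc P = P * B * P := h2.symm
        _ = (B * Pᵀ) * P := by rw [hPB]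
        _ = (B * P) * P := by rw [← hBPt]
    rw [e1, ← e2]
  have hcomm : P * B = B * P := by rw [hPB, ← hBPt]
  have hdotOmega : ∀ x w : Fin m → ℝ, InS C x → x ⬝ᵥ w = x ⬝ᵥ (Omega C *ᵥ w) := by
    intro x w hx
    rw [mulVec_dot' (Omega C) x w, omega_transpose, omega_fix C x hx]
  have hBP_fix : ∀ x, InS C x → (B * P) *ᵥ x = x := by
    intro x hx
    rw [← hcomm]
    have hPBx : InS C ((P * B) *ᵥ x) := by
      rw [← Matrix.mulVec_mulVec]; exact hInSP _
    have hzS : InS C (x - (P * B) *ᵥ x) := inS_sub C _ _ hx hPBx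
    have hBz : B *ᵥ (x - (P * B) *ᵥ x) = 0 := by
      rw [Matrix.mulVec_sub, Matrix.mulVec_mulVec, ← Matrix.mul_assoc, h1, sub_self]
    have hzMz : (x - (P * B) *ᵥ x) ⬝ᵥ (M *ᵥ (x - (P * B) *ᵥ x)) = 0 := by
      set z := x - (P * B) *ᵥ x with hzdef
      calc z ⬝ᵥ (M *ᵥ z)
          = z ⬝ᵥ (M *ᵥ (Omega C *ᵥ z)) := by rw [omega_fix C z hzS]
        _ = z ⬝ᵥ (Omega C *ᵥ (M *ᵥ (Omega C *ᵥ z))) := hdotOmega z _ hzS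
        _ = z ⬝ᵥ (B *ᵥ z) := by
            rw [Matrix.mulVec_mulVec, Matrix.mulVec_mulVec, hBdef]
        _ = 0 := by rw [hBz, dotProduct_zero]
    have hz0 : x - (P * B) *ᵥ x = 0 := by
      by_contra hne
      have := hM.dotProduct_mulVec_pos hne
      simp only [star_trivial] at this
      exact absurd hzMz (ne_of_gt this)
    exact (sub_eq_zero.mp hz0).symm
  have hKey : ∀ (g x : Fin m → ℝ), InS C x → x ⬝ᵥ (M *ᵥ (P *ᵥ g)) = x ⬝ᵥ g := by
    intro g x hx
    calc x ⬝ᵥ (M *ᵥ (P *ᵥ g))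
        = x ⬝ᵥ (M *ᵥ (Omega C *ᵥ (P *ᵥ g))) := by rw [omega_fix C _ (hInSP g)]
      _ = x ⬝ᵥ (Omega C *ᵥ (M *ᵥ (Omega C *ᵥ (P *ᵥ g)))) := hdotOmega x _ hx
      _ = x ⬝ᵥ ((B * P) *ᵥ g) := by
          simp only [Matrix.mulVec_mulVec, hBdef, Matrix.mul_assoc]
      _ = ((B * P) *ᵥ x) ⬝ᵥ g := by rw [mulVec_dot', h3]
      _ = x ⬝ᵥ g := by rw [hBP_fix x hx]
  constructor
  · intro x
    constructor
    · intro hx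
      exact ⟨x, omega_fix C x hx⟩
    · rintro ⟨y, rfl⟩
      exact inS_omega C hC y
  · intro qC qL
    intro qs
    have hqs_def : qs = qC - P *ᵥ (M *ᵥ qC + N *ᵥ qL) := rfl
    clear_value qs
    set g := M *ᵥ qC + N *ᵥ qL with hg
    have hfeas : InS C (qs - qC) := by
      have e : qs - qC = -(P *ᵥ g) := by rw [hqs_def]; abel
      rw [e]
      exact inS_neg C _ (hInSP g)
    refine ⟨hfeas, ?_⟩
    intro q' hq'
    obtain ⟨h, hh⟩ : ∃ h, h = q' - qs := ⟨_, rfl⟩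
    have hhS : InS C h := by
      have e : h = (q' - qC) - (qs - qC) := by rw [hh]; abel
      rw [e]
      exact inS_sub C _ _ hq' hfeas
    have hq'eq : q' = qs + h := by rw [hh]; abel
    have expand : ∀ x : Fin m → ℝ,
        Sum.elim x qL ⬝ᵥ ((Matrix.fromBlocks M N Nᵀ Q) *ᵥ Sum.elim x qL)
        = x ⬝ᵥ (M *ᵥ x) + 2 * (x ⬝ᵥ (N *ᵥ qL)) + qL ⬝ᵥ (Q *ᵥ qL) := by
      intro x
      rw [Matrix.fromBlocks_mulVec]
      simp only [Sum.elim_comp_inl, Sum.elim_comp_inr]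
      rw [sumElim_dotProduct_sumElim, dotProduct_add, dotProduct_add]
      have e : qL ⬝ᵥ (Nᵀ *ᵥ x) = x ⬝ᵥ (N *ᵥ qL) := by
        rw [mulVec_dot', Matrix.transpose_transpose, dotProduct_comm]
      rw [e]; ring
    have hMdot : qs ⬝ᵥ (M *ᵥ h) = h ⬝ᵥ (M *ᵥ qs) := by
      rw [mulVec_dot', hMsym, dotProduct_comm]
    have hzero : h ⬝ᵥ (M *ᵥ qs) + h ⬝ᵥ (N *ᵥ qL) = 0 := by
      have hms : M *ᵥ qs = M *ᵥ qC - M *ᵥ (P *ᵥ g) := by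
        rw [hqs_def, Matrix.mulVec_sub]
      rw [hms, dotProduct_sub, hKey g h hhS, hg, dotProduct_add]
      ring
    have hpos : (0:ℝ) ≤ h ⬝ᵥ (M *ᵥ h) := by
      have := hM.posSemidef.dotProduct_mulVec_nonneg h
      simpa using this
    have hexp2 : Sum.elim q' qL ⬝ᵥ ((Matrix.fromBlocks M N Nᵀ Q) *ᵥ Sum.elim q' qL)
        = Sum.elim qs qL ⬝ᵥ ((Matrix.fromBlocks M N Nᵀ Q) *ᵥ Sum.elim qs qL)
          + 2 * (h ⬝ᵥ (M *ᵥ qs) + h ⬝ᵥ (N *ᵥ qL)) + h ⬝ᵥ (M *ᵥ h) := by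
      rw [hq'eq, expand, expand]
      simp only [Matrix.mulVec_add, add_dotProduct, dotProduct_add]
      rw [hMdot]
      ring
    rw [hJ, hJ, hexp2, hzero]
    linarith
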